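/- Let x ∈ X_SE be a supported efficient solution. Then the weight set component of x is exactly the closed interval Λ(x) = [λ(α^x), λ(α_x)]; that is, for every λ ∈ [0,1], x ∈ X_λ if and only if λ(α^x) ≤ λ ≤ λ(α_x). -/
import Mathlib


open Set

noncomputable section

/-- The weighted-sum objective `λ·f₁ + (1−λ)·f₂`. -/
def wsum {X : Type*} (f₁ f₂ : X → ℝ) (lam : ℝ) (x : X) : ℝ :=
  lam * f₁ x + (1 - lam) * f₂ x

/-- `XlamSet f₁ f₂ λ` is the set `X_λ` of minimizers of the weighted-sum scalarisation. -/
def XlamSet {X : Type*} (f₁ f₂ : X → ℝ) (lam : ℝ) : Set X :=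
  {x | ∀ x' : X, wsum f₁ f₂ lam x ≤ wsum f₁ f₂ lam x'}

/-- `x` is supported efficient if it is optimal for some `λ ∈ (0,1)`. -/
def SuppEff {X : Type*} (f₁ f₂ : X → ℝ) (x : X) : Prop :=
  ∃ lam ∈ Set.Ioo (0 : ℝ) 1, x ∈ XlamSet f₁ f₂ lam

/-- The objSlope `s(x',x)` between the images of `x'` and `x`. -/
def objSlope {X : Type*} (f₁ f₂ : X → ℝ) (x' x : X) : ℝ :=
  (f₂ x' - f₂ x) / (f₁ x' - f₁ x)

/-- `X^<(x)`: the solutions with strictly smaller first objective value. -/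
def Xlt {X : Type*} (f₁ : X → ℝ) (x : X) : Set X := {x' | f₁ x' < f₁ x}

/-- `X^>(x)`: the solutions with strictly larger first objective value. -/
def Xgt {X : Type*} (f₁ : X → ℝ) (x : X) : Set X := {x' | f₁ x < f₁ x'}

/-- `α_x = max({s(x',x) : x' ∈ X^<(x)} ∪ {−∞})`, as an extended real. -/
def alphaLow {X : Type*} (f₁ f₂ : X → ℝ) (x : X) : EReal :=
  sSup ((fun x' => (objSlope f₁ f₂ x' x : EReal)) '' Xlt f₁ x ∪ {⊥})

/-- `α^x = min({s(x',x) : x' ∈ X^>(x)} ∪ {0})`, as an extended real. -/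
def alphaHigh {X : Type*} (f₁ f₂ : X → ℝ) (x : X) : EReal :=
  sInf ((fun x' => (objSlope f₁ f₂ x' x : EReal)) '' Xgt f₁ x ∪ {0})

/-- `λ(α) = α/(α−1)` for real `α ≤ 0`, extended by `λ(−∞) = 1`. -/
def lamOf (a : EReal) : ℝ :=
  if a = ⊥ then 1 else a.toReal / (a.toReal - 1)

-- helpers
lemma lamOf_bot : lamOf ⊥ = 1 := by simp [lamOf]

lemma lamOf_coe (r : ℝ) : lamOf (r : EReal) = r / (r - 1) := by
  simp [lamOf]

lemma g_lt {s lam : ℝ} (hs : s < 0) : lam + (1 - lam) * s ≤ 0 ↔ lam ≤ s / (s - 1) := by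
  rw [le_div_iff_of_neg (by linarith : s - 1 < 0)]
  constructor <;> intro h <;> nlinarith

lemma g_le {s lam : ℝ} (hs : s ≤ 0) : 0 ≤ lam + (1 - lam) * s ↔ s / (s - 1) ≤ lam := by
  rw [div_le_iff_of_neg (by linarith : s - 1 < 0)]
  constructor <;> intro h <;> nlinarith

lemma g_mono {s t : ℝ} (hst : s ≤ t) (ht : t ≤ 0) : t / (t - 1) ≤ s / (s - 1) := by
  have hs1 : s - 1 < 0 := by linarith
  have ht1 : t - 1 < 0 := by linarith
  have key : s / (s - 1) - t / (t - 1) = (t - s) / ((s - 1) * (t - 1)) := by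
    rw [div_sub_div _ _ hs1.ne ht1.ne]
    congr 1
    ring
  have h2 : 0 ≤ (t - s) / ((s - 1) * (t - 1)) :=
    div_nonneg (by linarith) (le_of_lt (mul_pos_of_neg_of_neg hs1 ht1))
  linarith [key, h2]

lemma mem_XlamSet_iff {X : Type*} (f₁ f₂ : X → ℝ) (lam : ℝ) (x : X) :
    x ∈ XlamSet f₁ f₂ lam ↔
      ∀ x', 0 ≤ lam * (f₁ x' - f₁ x) + (1 - lam) * (f₂ x' - f₂ x) := by
  simp only [XlamSet, Set.mem_setOf_eq, wsum]
  constructor <;> intro h x' <;> have := h x' <;> linarith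

lemma cond_lt {X : Type*} (f₁ f₂ : X → ℝ) {lam : ℝ} {x x' : X} (h : f₁ x' < f₁ x) :
    (0 ≤ lam * (f₁ x' - f₁ x) + (1 - lam) * (f₂ x' - f₂ x)) ↔
      lam + (1 - lam) * objSlope f₁ f₂ x' x ≤ 0 := by
  have hΔ : f₂ x' - f₂ x = objSlope f₁ f₂ x' x * (f₁ x' - f₁ x) :=
    (div_mul_cancel₀ _ (sub_ne_zero.mpr (ne_of_lt h))).symm
  rw [hΔ, show lam * (f₁ x' - f₁ x) + (1 - lam) * (objSlope f₁ f₂ x' x * (f₁ x' - f₁ x))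
      = (lam + (1 - lam) * objSlope f₁ f₂ x' x) * (f₁ x' - f₁ x) by ring]
  have he : f₁ x' - f₁ x < 0 := by linarith
  constructor <;> intro h' <;> nlinarith

lemma cond_gt {X : Type*} (f₁ f₂ : X → ℝ) {lam : ℝ} {x x' : X} (h : f₁ x < f₁ x') :
    (0 ≤ lam * (f₁ x' - f₁ x) + (1 - lam) * (f₂ x' - f₂ x)) ↔
      0 ≤ lam + (1 - lam) * objSlope f₁ f₂ x' x := by
  have hΔ : f₂ x' - f₂ x = objSlope f₁ f₂ x' x * (f₁ x' - f₁ x) :=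
    (div_mul_cancel₀ _ (sub_ne_zero.mpr (ne_of_gt h))).symm
  rw [hΔ, show lam * (f₁ x' - f₁ x) + (1 - lam) * (objSlope f₁ f₂ x' x * (f₁ x' - f₁ x))
      = (lam + (1 - lam) * objSlope f₁ f₂ x' x) * (f₁ x' - f₁ x) by ring]
  have he : 0 < f₁ x' - f₁ x := by linarith
  constructor <;> intro h' <;> nlinarith

lemma alphaLow_spec {X : Type*} [Fintype X] (f₁ f₂ : X → ℝ) (x : X) :
    (alphaLow f₁ f₂ x = ⊥ ∧ ∀ x', x' ∉ Xlt f₁ x) ∨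
    ∃ x₀ ∈ Xlt f₁ x, alphaLow f₁ f₂ x = (objSlope f₁ f₂ x₀ x : EReal) ∧
      ∀ x' ∈ Xlt f₁ x, objSlope f₁ f₂ x' x ≤ objSlope f₁ f₂ x₀ x := by
  have hfin : ((fun x' => (objSlope f₁ f₂ x' x : EReal)) '' Xlt f₁ x ∪ {⊥}).Finite :=
    ((Set.toFinite _).image _).union (Set.finite_singleton _)
  have hne : ((fun x' => (objSlope f₁ f₂ x' x : EReal)) '' Xlt f₁ x ∪ {⊥}).Nonempty :=
    ⟨⊥, Or.inr rfl⟩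
  have hmem : alphaLow f₁ f₂ x ∈
      ((fun x' => (objSlope f₁ f₂ x' x : EReal)) '' Xlt f₁ x ∪ {⊥}) :=
    hne.csSup_mem hfin
  have hub : ∀ x' ∈ Xlt f₁ x, (objSlope f₁ f₂ x' x : EReal) ≤ alphaLow f₁ f₂ x :=
    fun x' hx' => le_sSup (Or.inl ⟨x', hx', rfl⟩)
  rcases hmem with h | h
  · obtain ⟨x₀, hx₀, heq⟩ := h
    right
    refine ⟨x₀, hx₀, heq.symm, fun x' hx' => ?_⟩
    have := hub x' hx'
    rw [← heq] at this
    exact EReal.coe_le_coe_iff.mp this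
  · left
    rw [Set.mem_singleton_iff] at h
    refine ⟨h, fun x' hx' => ?_⟩
    have := hub x' hx'
    rw [h] at this
    exact EReal.coe_ne_bot _ (le_bot_iff.mp this)

lemma alphaHigh_spec {X : Type*} [Fintype X] (f₁ f₂ : X → ℝ) (x : X) :
    ∃ b : ℝ, alphaHigh f₁ f₂ x = (b : EReal) ∧ b ≤ 0 ∧
      (∀ x' ∈ Xgt f₁ x, b ≤ objSlope f₁ f₂ x' x) ∧
      (b = 0 ∨ ∃ x₁ ∈ Xgt f₁ x, b = objSlope f₁ f₂ x₁ x) := by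
  have hfin : ((fun x' => (objSlope f₁ f₂ x' x : EReal)) '' Xgt f₁ x ∪ {0}).Finite :=
    ((Set.toFinite _).image _).union (Set.finite_singleton _)
  have hne : ((fun x' => (objSlope f₁ f₂ x' x : EReal)) '' Xgt f₁ x ∪ {0}).Nonempty :=
    ⟨0, Or.inr rfl⟩
  have hmem : alphaHigh f₁ f₂ x ∈
      ((fun x' => (objSlope f₁ f₂ x' x : EReal)) '' Xgt f₁ x ∪ {0}) :=
    hne.csInf_mem hfin
  have hle0 : alphaHigh f₁ f₂ x ≤ (0 : EReal) := sInf_le (Or.inr rfl)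
  have hlb : ∀ x' ∈ Xgt f₁ x, alphaHigh f₁ f₂ x ≤ (objSlope f₁ f₂ x' x : EReal) :=
    fun x' hx' => sInf_le (Or.inl ⟨x', hx', rfl⟩)
  rcases hmem with h | h
  · obtain ⟨x₁, hx₁, heq⟩ := h
    refine ⟨objSlope f₁ f₂ x₁ x, heq.symm, ?_, fun x' hx' => ?_, Or.inr ⟨x₁, hx₁, rfl⟩⟩
    · rw [← heq] at hle0
      have h0 : ((objSlope f₁ f₂ x₁ x : ℝ) : EReal) ≤ ((0 : ℝ) : EReal) := by
        exact hle0
      exact EReal.coe_le_coe_iff.mp h0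
    · have := hlb x' hx'
      rw [← heq] at this
      exact EReal.coe_le_coe_iff.mp this
  · rw [Set.mem_singleton_iff] at h
    refine ⟨0, by exact_mod_cast h, le_refl 0, fun x' hx' => ?_, Or.inl rfl⟩
    have := hlb x' hx'
    rw [h] at this
    exact_mod_cast this

/-- For a supported efficient solution `x`, the weight set component of `x`
is the closed interval `[λ(α^x), λ(α_x)]`: for every `λ ∈ [0,1]`, `x ∈ X_λ` if and only if
`λ(α^x) ≤ λ ≤ λ(α_x)`. -/
theorem weight_set_component_eq_interval
    {X : Type*} [Fintype X] [Nonempty X] (f₁ f₂ : X → ℝ) (x : X)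
    (hx : SuppEff f₁ f₂ x) :
    ∀ lam ∈ Set.Icc (0 : ℝ) 1,
      (x ∈ XlamSet f₁ f₂ lam ↔
        lamOf (alphaHigh f₁ f₂ x) ≤ lam ∧ lam ≤ lamOf (alphaLow f₁ f₂ x)) := by
  obtain ⟨l0, hl0, hx0⟩ := hx
  obtain ⟨hl0a, hl0b⟩ := hl0
  -- fact 1 : ties in f₁ have f₂ x ≤ f₂ x'
  have fact1 : ∀ x', f₁ x' = f₁ x → f₂ x ≤ f₂ x' := by
    intro x' he
    have h' := hx0 x'
    unfold wsum at h'
    rw [he] at h'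
    nlinarith
  -- fact 2 : slopes to the left are negative
  have fact2 : ∀ x' ∈ Xlt f₁ x, objSlope f₁ f₂ x' x < 0 := by
    intro x' hx'
    have h' := hx0 x'
    unfold wsum at h'
    have he : f₁ x' < f₁ x := hx'
    have hΔ : 0 < f₂ x' - f₂ x := by nlinarith
    exact div_neg_of_pos_of_neg hΔ (by linarith)
  intro lam hlam
  obtain ⟨hlam0, hlam1⟩ := hlam
  obtain ⟨b, hbeq, hb0, hblb, hbcase⟩ := alphaHigh_spec f₁ f₂ x
  rw [mem_XlamSet_iff, hbeq, lamOf_coe]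
  rcases alphaLow_spec f₁ f₂ x with ⟨haeq, hempty⟩ | ⟨x₀, hx₀, haeq, haub⟩
  · -- Xlt is empty, alphaLow = ⊥
    rw [haeq, lamOf_bot]
    constructor
    · intro hmin
      refine ⟨?_, hlam1⟩
      rcases hbcase with rfl | ⟨x₁, hx₁, hb⟩
      · simpa using hlam0
      · subst hb
        exact (g_le hb0).mp ((cond_gt f₁ f₂ hx₁).mp (hmin x₁))
    · rintro ⟨hL, _⟩ x'
      rcases lt_trichotomy (f₁ x') (f₁ x) with h | h | h
      · exact absurd h (hempty x')
      · have hz : lam * (f₁ x' - f₁ x) = 0 := by rw [h]; ring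
        have hΔ := fact1 x' h
        nlinarith
      · rw [cond_gt f₁ f₂ h]
        by_cases hs : objSlope f₁ f₂ x' x ≤ 0
        · have hmono := g_mono (hblb x' h) hs
          exact (g_le hs).mpr (le_trans hmono hL)
        · push_neg at hs
          nlinarith
  · -- alphaLow attained at x₀
    have hs0 : objSlope f₁ f₂ x₀ x < 0 := fact2 x₀ hx₀
    rw [haeq, lamOf_coe]
    constructor
    · intro hmin
      constructor
      · rcases hbcase with rfl | ⟨x₁, hx₁, hb⟩
        · simpa using hlam0
        · subst hb
          exact (g_le hb0).mp ((cond_gt f₁ f₂ hx₁).mp (hmin x₁))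
      · exact (g_lt hs0).mp ((cond_lt f₁ f₂ hx₀).mp (hmin x₀))
    · rintro ⟨hL, hU⟩ x'
      rcases lt_trichotomy (f₁ x') (f₁ x) with h | h | h
      · rw [cond_lt f₁ f₂ h]
        have hs := fact2 x' h
        have hmono := g_mono (haub x' h) (le_of_lt hs0)
        exact (g_lt hs).mpr (le_trans hU hmono)
      · have hz : lam * (f₁ x' - f₁ x) = 0 := by rw [h]; ring
        have hΔ := fact1 x' h
        nlinarith
      · rw [cond_gt f₁ f₂ h]
        by_cases hs : objSlope f₁ f₂ x' x ≤ 0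
        · have hmono := g_mono (hblb x' h) hs
          exact (g_le hs).mpr (le_trans hmono hL)
        · push_neg at hs
          nlinarith
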